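/- Let n ≥ 2 and let v_0,…,v_n be affinely independent points in ℝ^n forming an n-simplex S such that ⟨v_j − v_i, v_k − v_i⟩ ≥ 0 for all pairwise distinct i, j, k (all triangular faces of S are nonobtuse, so all vertex Gramians of S are entrywise nonnegative). If every 3×3 principal submatrix of every vertex Gramian of S is nonblocking, then the inverse of every vertex Gramian of S is a weakly diagonally dominant Stieltjes matrix (i.e., S is a nonobtuse simplex). -/

import Mathlib

open Matrix Finset
open scoped RealInnerProductSpace

noncomputable section

/-- The vertex Gramian of the simplex with vertices `v` associated with vertex `v ℓ`. -/
def vGram {n : ℕ} (v : Fin (n + 1) → EuclideanSpace ℝ (Fin n)) (ℓ : Fin (n + 1)) :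
    Matrix {k : Fin (n + 1) // k ≠ ℓ} {k : Fin (n + 1) // k ≠ ℓ} ℝ :=
  Matrix.of fun i j => ⟪v i.1 - v ℓ, v j.1 - v ℓ⟫

/-- A Stieltjes matrix: symmetric positive definite with nonpositive off-diagonal entries. -/
def IsStieltjes {ι : Type*} [Fintype ι] (M : Matrix ι ι ℝ) : Prop :=
  M.PosDef ∧ ∀ i j, i ≠ j → M i j ≤ 0

/-- Weakly diagonally dominant: `M e ≥ 0` entrywise for the all-ones vector `e`. -/
def IsWDD {ι : Type*} [Fintype ι] (M : Matrix ι ι ℝ) : Prop :=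
  ∀ i, 0 ≤ ∑ j, M i j

/-- Pointwise weakly diagonally dominant: each diagonal entry is maximal in its row. -/
def PWDD {ι : Type*} (M : Matrix ι ι ℝ) : Prop :=
  ∀ i j, M i j ≤ M i i

/-- The orthogonal projection of `x` onto the affine span of `{v k : k ∈ s}`
lies in the convex hull of `{v k : k ∈ s}`. -/
def ProjInHull {n : ℕ} (x : EuclideanSpace ℝ (Fin n))
    (v : Fin (n + 1) → EuclideanSpace ℝ (Fin n)) (s : Set (Fin (n + 1))) : Prop :=
  ∃ p ∈ convexHull ℝ (v '' s), ∀ a ∈ s, ∀ b ∈ s, ⟪x - p, v a - v b⟫ = 0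

/-- All facets of the simplex are nonobtuse: each vertex `v i` projects, for each `j ≠ i`,
into the convex hull of the vertices other than `v i, v j`. -/
def FacetsNonobtuse {n : ℕ} (v : Fin (n + 1) → EuclideanSpace ℝ (Fin n)) : Prop :=
  ∀ i j : Fin (n + 1), i ≠ j → ProjInHull (v i) v {k | k ≠ i ∧ k ≠ j}

/-- `q` is an inward normal to the facet opposite `v j`. -/
def IsInwardNormal {n : ℕ} (v : Fin (n + 1) → EuclideanSpace ℝ (Fin n)) (j : Fin (n + 1))
    (q : EuclideanSpace ℝ (Fin n)) : Prop :=
  q ≠ 0 ∧ (∀ a b : Fin (n + 1), a ≠ j → b ≠ j → ⟪q, v a - v b⟫ = 0) ∧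
    ∀ k : Fin (n + 1), k ≠ j → 0 < ⟪q, v j - v k⟫

/-- The `j`-th column of `A` is a blocking column: no off-diagonal entry of column `j`
is minimal in its row. -/
def IsBlockingCol {ι : Type*} (A : Matrix ι ι ℝ) (j : ι) : Prop :=
  ∀ i, i ≠ j → ∃ k, A i k < A i j

/-- `A` is nonblocking: every column has an off-diagonal entry minimal in its row. -/
def IsNonblocking {ι : Type*} (A : Matrix ι ι ℝ) : Prop :=
  ∀ j, ∃ i, i ≠ j ∧ ∀ k, A i j ≤ A i k

/-- A (symmetric nonnegative) ultrametric matrix. -/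
def IsUltra {ι : Type*} (A : Matrix ι ι ℝ) : Prop :=
  (∀ i j, 0 ≤ A i j) ∧ (∀ i j, A i j ≤ A i i) ∧ ∀ i j k, min (A i k) (A k j) ≤ A i j

/-- The principal submatrix of `A` with rows and columns restricted to `s`. -/
def subMat {ι : Type*} (A : Matrix ι ι ℝ) (s : Finset ι) :
    Matrix {x // x ∈ s} {x // x ∈ s} ℝ :=
  A.submatrix (fun i => i.1) (fun j => j.1)

/-- The principal submatrix of `A` obtained by deleting row and column `m`. -/
def delMat {ι : Type*} (A : Matrix ι ι ℝ) (m : ι) : Matrix {i // i ≠ m} {i // i ≠ m} ℝ :=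
  A.submatrix (fun i => i.1) (fun j => j.1)

section Tetra

variable {V : Type*} [NormedAddCommGroup V] [InnerProductSpace ℝ V]

/-- The triangle with vertices `a, b, c` is nonobtuse. -/
def NonobtuseTri (a b c : V) : Prop :=
  0 ≤ ⟪b - a, c - a⟫ ∧ 0 ≤ ⟪a - b, c - b⟫ ∧ 0 ≤ ⟪a - c, b - c⟫

/-- The sub-orthocentric set of the triangle `a b c`: the union over the vertices of the
closed segments from the vertex to the orthocenter. -/
def SubOrthoSet (a b c : V) : Set V :=
  {x | ∃ h, h ∈ affineSpan ℝ ({a, b, c} : Set V) ∧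
    ⟪h - a, b - c⟫ = 0 ∧ ⟪h - b, a - c⟫ = 0 ∧
    (x ∈ segment ℝ a h ∨ x ∈ segment ℝ b h ∨ x ∈ segment ℝ c h)}

/-- `p` is the orthogonal projection of `x` onto the affine span of `{a, b, c}`. -/
def IsOrthProjTri (x p a b c : V) : Prop :=
  p ∈ affineSpan ℝ ({a, b, c} : Set V) ∧ ⟪x - p, b - a⟫ = 0 ∧ ⟪x - p, c - a⟫ = 0

/-- A sub-orthocentric tetrahedron: all triangular faces are nonobtuse and each vertex
projects orthogonally into the sub-orthocentric set of its opposite face. -/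
def IsSubOrthoTetra (w : Fin 4 → V) : Prop :=
  ∀ i : Fin 4,
    NonobtuseTri (w (i.succAbove 0)) (w (i.succAbove 1)) (w (i.succAbove 2)) ∧
    ∃ p, IsOrthProjTri (w i) p (w (i.succAbove 0)) (w (i.succAbove 1)) (w (i.succAbove 2)) ∧
      p ∈ SubOrthoSet (w (i.succAbove 0)) (w (i.succAbove 1)) (w (i.succAbove 2))

end Tetra

section Stmt11Aux
set_option linter.unusedSectionVars false
set_option maxHeartbeats 1000000
namespace Stmt11Aux
variable {ι : Type*} [DecidableEq ι]

variable {ι : Type*} [DecidableEq ι]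


def ext0 (S : Finset ι) (g : {x // x ∈ S} → ℝ) : ι → ℝ :=
  fun k => if h : k ∈ S then g ⟨k, h⟩ else 0

lemma ext0_mem {S : Finset ι} (g : {x // x ∈ S} → ℝ) {k : ι} (h : k ∈ S) :
    ext0 S g k = g ⟨k, h⟩ := by unfold ext0; exact dif_pos h

lemma ext0_not_mem {S : Finset ι} (g : {x // x ∈ S} → ℝ) {k : ι} (h : k ∉ S) :
    ext0 S g k = 0 := by unfold ext0; exact dif_neg h

/-- bridge between sums over a finset and sums over its coercion to a type -/
lemma sum_S_subtype (S : Finset ι) (f : {x // x ∈ S} → ℝ) (g : ι → ℝ)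
    (hfg : ∀ k (hk : k ∈ S), g k = f ⟨k, hk⟩) : ∑ k ∈ S, g k = ∑ k : {x // x ∈ S}, f k := by
  rw [← Finset.sum_coe_sort S g]
  exact Finset.sum_congr rfl fun k _ => hfg k.1 k.2

lemma isHermitian_of_symm [Fintype ι] (M : Matrix ι ι ℝ) (h : ∀ i j, M i j = M j i) :
    M.IsHermitian := by
  apply Matrix.IsHermitian.ext
  intro i j
  simp only [RCLike.star_def, starRingEnd_apply, star_trivial]
  exact h j i

lemma posdef_restrict_shift [Fintype ι] (A : Matrix ι ι ℝ) (hpd : A.PosDef)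
    (hsymm : ∀ i j, A i j = A j i) (S : Finset ι) (c t : ℝ) (w : ι → ℝ)
    (hwS : ∀ k ∈ S, w k = 0)
    (hAwS : ∀ i ∈ S, ∑ k, A i k * w k = t)
    (hAwT : ∀ i, i ∉ S → w i ≠ 0 → (∑ k, A i k * w k = 1 ∧ ∀ j ∈ S, A i j = c)) :
    (Matrix.of fun i j : {x // x ∈ S} => A i.1 j.1 - c * t).PosDef := by
  classical
  refine Matrix.PosDef.of_dotProduct_mulVec_pos ?_ ?_
  · exact isHermitian_of_symm _ fun i j => by simp [hsymm i.1 j.1]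
  · intro x hx
    set xh : ι → ℝ := ext0 S x with hxh
    set ζ : ℝ := ∑ k ∈ S, xh k with hζ
    set z : ι → ℝ := fun k => xh k - c * ζ * w k with hz
    have hxhS : ∀ k, k ∉ S → xh k = 0 := fun k h => ext0_not_mem x h
    have hzS : ∀ k ∈ S, z k = xh k := by
      intro k hk; rw [hz]; simp [hwS k hk]
    have hzT : ∀ k, k ∉ S → z k = - (c * ζ * w k) := by
      intro k hk; rw [hz]; simp [hxhS k hk]
    have hzne : z ≠ 0 := by
      intro h0
      apply hx
      funext i
      have := congrFun h0 i.1
      rw [hzS i.1 i.2] at this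
      rw [hxh] at this
      rw [ext0_mem x i.2] at this
      simpa using this
    have hq := hpd.dotProduct_mulVec_pos hzne
    simp only [star_trivial] at hq
    -- compute the quadratic form of z
    have hxz : ∀ i, ∑ k, A i k * z k = (∑ k, A i k * xh k) - c * ζ * (∑ k, A i k * w k) := by
      intro i
      rw [Finset.mul_sum, ← Finset.sum_sub_distrib]
      exact Finset.sum_congr rfl fun k _ => by rw [hz]; ring
    have hxsum : ∀ i, ∑ k, A i k * xh k = ∑ k ∈ S, A i k * xh k := by
      intro i
      exact (Finset.sum_subset (Finset.subset_univ S)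
        (fun k _ hk => by rw [hxhS k hk, mul_zero])).symm
    have hinnerT : ∀ i, i ∉ S → w i ≠ 0 → ∑ k, A i k * z k = 0 := by
      intro i hi hwi
      obtain ⟨h1, h2⟩ := hAwT i hi hwi
      rw [hxz i, h1, hxsum i]
      have : ∑ k ∈ S, A i k * xh k = c * ζ := by
        rw [hζ, Finset.mul_sum]
        exact Finset.sum_congr rfl fun k hk => by rw [h2 k hk]
      rw [this]; ring
    have hinnerS : ∀ i, i ∈ S → ∑ k, A i k * z k = (∑ k ∈ S, A i k * xh k) - c * ζ * t := by
      intro i hi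
      rw [hxz i, hAwS i hi, hxsum i]
    -- the quadratic form equals the (restricted, shifted) quadratic form of x
    have hsplit : ∑ i, z i * (∑ k, A i k * z k)
        = ∑ i ∈ S, z i * (∑ k, A i k * z k) + ∑ i ∈ Sᶜ, z i * (∑ k, A i k * z k) :=
      (Finset.sum_add_sum_compl S _).symm
    have hTzero : ∑ i ∈ Sᶜ, z i * (∑ k, A i k * z k) = 0 := by
      refine Finset.sum_eq_zero fun i hi => ?_
      have hi' : i ∉ S := Finset.mem_compl.1 hi
      by_cases hwi : w i = 0
      · rw [hzT i hi', hwi]; ring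
      · rw [hinnerT i hi' hwi, mul_zero]
    have hSval : ∑ i ∈ S, z i * (∑ k, A i k * z k)
        = (∑ i ∈ S, xh i * ∑ k ∈ S, A i k * xh k) - c * t * ζ ^ 2 := by
      rw [Finset.sum_congr rfl (fun i hi => by rw [hzS i hi, hinnerS i hi])]
      have : ∀ i ∈ S, xh i * ((∑ k ∈ S, A i k * xh k) - c * ζ * t)
          = xh i * (∑ k ∈ S, A i k * xh k) - (c * ζ * t) * xh i := by
        intro i _; ring
      rw [Finset.sum_congr rfl this, Finset.sum_sub_distrib, ← Finset.mul_sum, ← hζ]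
      ring
    have hdot : dotProduct z (A *ᵥ z) = ∑ i, z i * (∑ k, A i k * z k) := by
      simp [dotProduct, Matrix.mulVec]
    rw [hdot, hsplit, hTzero, hSval, add_zero] at hq
    -- now identify with the subtype quadratic form
    have hζ' : ζ = ∑ k : {x // x ∈ S}, x k := by
      rw [hζ, hxh]
      exact sum_S_subtype S x _ (fun k hk => ext0_mem x hk)
    have hquad : dotProduct (star x) ((Matrix.of fun i j : {x // x ∈ S} => A i.1 j.1 - c * t) *ᵥ x)
        = (∑ i ∈ S, xh i * ∑ k ∈ S, A i k * xh k) - c * t * ζ ^ 2 := by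
      simp only [star_trivial, dotProduct, Matrix.mulVec, dotProduct, Matrix.of_apply]
      have hinner : ∀ i : {x // x ∈ S}, ∑ j : {x // x ∈ S}, (A i.1 j.1 - c * t) * x j
          = (∑ j : {x // x ∈ S}, A i.1 j.1 * x j) - c * t * (∑ j : {x // x ∈ S}, x j) := by
        intro i
        rw [Finset.mul_sum, ← Finset.sum_sub_distrib]
        exact Finset.sum_congr rfl fun j _ => by ring
      rw [Finset.sum_congr rfl (fun i _ => by rw [hinner i])]
      have hb1 : ∀ i : {x // x ∈ S}, ∑ j : {x // x ∈ S}, A i.1 j.1 * x j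
          = ∑ k ∈ S, A i.1 k * xh k :=
        fun i => (sum_S_subtype S _ _ (fun k hk => by rw [hxh, ext0_mem x hk])).symm
      have hexp : ∀ i : {x // x ∈ S}, x i * ((∑ k ∈ S, A i.1 k * xh k) - c * t * ζ)
          = x i * (∑ k ∈ S, A i.1 k * xh k) - (c * t * ζ) * x i := fun i => by ring
      rw [Finset.sum_congr rfl (fun i _ => by rw [hb1 i, ← hζ', hexp i])]
      rw [Finset.sum_sub_distrib, ← Finset.mul_sum, ← hζ']
      have : ∑ i : {x // x ∈ S}, x i * (∑ k ∈ S, A i.1 k * xh k)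
          = ∑ i ∈ S, xh i * ∑ k ∈ S, A i k * xh k := by
        rw [sum_S_subtype S (fun i => x i * (∑ k ∈ S, A i.1 k * xh k))
          (fun i => xh i * ∑ k ∈ S, A i k * xh k) (fun k hk => by simp only [hxh]; rw [ext0_mem x hk])]
      rw [this]
      ring
    rw [hquad]
    exact hq

lemma posdef_restrict [Fintype ι] (A : Matrix ι ι ℝ) (hpd : A.PosDef)
    (hsymm : ∀ i j, A i j = A j i) (S : Finset ι) :
    (Matrix.of fun i j : {x // x ∈ S} => A i.1 j.1).PosDef := by
  have := posdef_restrict_shift A hpd hsymm S 0 0 (fun _ => 0)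
    (fun k _ => rfl) (fun i _ => by simp) (fun i _ h => absurd rfl h)
  simpa using this



/-- quadratic forms of ultrametric matrices are nonneg -/
lemma ultra_qf_nonneg : ∀ (m : ℕ) (A : Matrix ι ι ℝ) (s : Finset ι), s.card = m →
    (∀ i ∈ s, ∀ j ∈ s, A i j = A j i) →
    (∀ i ∈ s, ∀ j ∈ s, 0 ≤ A i j) →
    (∀ i ∈ s, ∀ j ∈ s, A i j ≤ A i i) →
    (∀ i ∈ s, ∀ j ∈ s, ∀ k ∈ s, min (A i k) (A k j) ≤ A i j) →
    ∀ x : ι → ℝ, 0 ≤ ∑ i ∈ s, ∑ j ∈ s, A i j * x i * x j := by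
  intro m
  induction m using Nat.strong_induction_on with
  | _ m IH =>
  intro A s hcard hsymm hnn hpw hmin x
  classical
  rcases s.eq_empty_or_nonempty with rfl | hne
  · simp
  -- minimal entry
  obtain ⟨p, hpmem, hpmin⟩ := Finset.exists_min_image (s ×ˢ s) (fun q => A q.1 q.2)
    (hne.product hne)
  set τ := A p.1 p.2 with hτ
  have hpp := Finset.mem_product.1 hpmem
  have hτle : ∀ i ∈ s, ∀ j ∈ s, τ ≤ A i j := by
    intro i hi j hj
    exact hpmin (i, j) (Finset.mem_product.2 ⟨hi, hj⟩)
  have hτ0 : 0 ≤ τ := hnn _ hpp.1 _ hpp.2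
  by_cases hsub : ∀ a ∈ s, ∀ b ∈ s, a = b
  · -- s is a singleton
    obtain ⟨a, ha⟩ := hne
    have hs : s = {a} := by
      apply Finset.eq_singleton_iff_unique_mem.2
      exact ⟨ha, fun b hb => hsub b hb a ha⟩
    subst hs
    simp only [Finset.sum_singleton]
    have := hnn a (Finset.mem_singleton_self a) a (Finset.mem_singleton_self a)
    nlinarith [mul_self_nonneg (x a)]
  · push_neg at hsub
    obtain ⟨a, ha, b, hb, hab⟩ := hsub
    -- find i₀ ≠ j₀ in s with A i₀ j₀ = τ
    have hpair : ∃ i₀ ∈ s, ∃ j₀ ∈ s, i₀ ≠ j₀ ∧ A i₀ j₀ = τ := by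
      by_cases hpq : p.1 = p.2
      · -- diagonal minimum: row p.1 is constant τ
        set z := p.1 with hz
        have hzs : z ∈ s := hpp.1
        have hzz : A z z = τ := by rw [hτ, hpq]
        obtain ⟨c, hc, hcz⟩ : ∃ c ∈ s, c ≠ z := by
          by_cases haz : a = z
          · exact ⟨b, hb, by rw [← haz]; exact fun h => hab h.symm⟩
          · exact ⟨a, ha, haz⟩
        refine ⟨z, hzs, c, hc, fun h => hcz h.symm, le_antisymm ?_ (hτle _ hzs _ hc)⟩
        calc A z c ≤ A z z := hpw z hzs c hc
        _ = τ := hzz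
      · exact ⟨p.1, hpp.1, p.2, hpp.2, hpq, rfl⟩
    obtain ⟨i₀, hi₀, j₀, hj₀, hij₀, hAij₀⟩ := hpair
    set S := s.filter (fun k => k = i₀ ∨ τ < A i₀ k) with hS
    set T := s.filter (fun k => ¬(k = i₀ ∨ τ < A i₀ k)) with hT
    have hi₀S : i₀ ∈ S := Finset.mem_filter.2 ⟨hi₀, Or.inl rfl⟩
    have hj₀T : j₀ ∈ T := by
      refine Finset.mem_filter.2 ⟨hj₀, ?_⟩
      push_neg
      exact ⟨fun h => hij₀ h.symm, by rw [hAij₀]⟩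
    have hSs : S ⊆ s := Finset.filter_subset _ _
    have hTs : T ⊆ s := Finset.filter_subset _ _
    have hST : ∀ k ∈ S, k ∉ T := by
      intro k hk hk'
      exact (Finset.mem_filter.1 hk').2 (Finset.mem_filter.1 hk).2
    -- cross entries equal τ
    have hcross : ∀ c ∈ S, ∀ e ∈ T, A c e = τ := by
      intro c hc e he
      obtain ⟨hcs, hcp⟩ := Finset.mem_filter.1 hc
      obtain ⟨hes, hep⟩ := Finset.mem_filter.1 he
      push_neg at hep
      refine le_antisymm ?_ (hτle _ hcs _ hes)
      by_contra hlt
      push_neg at hlt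
      rcases hcp with rfl | hcp
      · exact absurd hlt (not_lt.2 (hep.2))
      · have := hmin i₀ hi₀ e hes c hcs
        rw [min_def] at this
        have : τ < A i₀ e := by
          split_ifs at this with h
          · exact lt_of_lt_of_le hcp this
          · exact lt_of_lt_of_le hlt this
        exact absurd this (not_lt.2 hep.2)
    -- split the sum
    have hsplit : ∀ f : ι → ℝ, ∑ k ∈ s, f k = ∑ k ∈ S, f k + ∑ k ∈ T, f k := by
      intro f
      rw [hS, hT]
      exact (Finset.sum_filter_add_sum_filter_not s _ f).symm
    set A' : Matrix ι ι ℝ := fun i j => A i j - τ with hA'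
    have key : ∑ i ∈ s, ∑ j ∈ s, A i j * x i * x j
        = (∑ i ∈ S, ∑ j ∈ S, A' i j * x i * x j)
          + (∑ i ∈ T, ∑ j ∈ T, A' i j * x i * x j)
          + τ * ((∑ i ∈ s, x i) * (∑ j ∈ s, x j)) := by
      have hτsum : τ * ((∑ i ∈ s, x i) * (∑ j ∈ s, x j))
          = ∑ i ∈ s, ∑ j ∈ s, τ * (x i * x j) := by
        rw [Finset.sum_mul_sum, Finset.mul_sum]
        exact Finset.sum_congr rfl fun i _ => by rw [Finset.mul_sum]
      have e1 : ∑ i ∈ s, ∑ j ∈ s, A i j * x i * x j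
          = (∑ i ∈ s, ∑ j ∈ s, A' i j * x i * x j)
            + τ * ((∑ i ∈ s, x i) * (∑ j ∈ s, x j)) := by
        rw [hτsum, ← Finset.sum_add_distrib]
        refine Finset.sum_congr rfl fun i _ => ?_
        rw [← Finset.sum_add_distrib]
        refine Finset.sum_congr rfl fun j _ => ?_
        simp only [hA']
        ring
      have e2 : ∑ i ∈ s, ∑ j ∈ s, A' i j * x i * x j
          = (∑ i ∈ S, ∑ j ∈ S, A' i j * x i * x j)
            + (∑ i ∈ T, ∑ j ∈ T, A' i j * x i * x j) := by
        rw [hsplit (fun i => ∑ j ∈ s, A' i j * x i * x j)]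
        have eS : ∀ i ∈ S, ∑ j ∈ s, A' i j * x i * x j = ∑ j ∈ S, A' i j * x i * x j := by
          intro i hi
          rw [hsplit (fun j => A' i j * x i * x j)]
          have : ∑ j ∈ T, A' i j * x i * x j = 0 := by
            refine Finset.sum_eq_zero fun j hj => ?_
            have : A' i j = 0 := by simp [hA', hcross i hi j hj]
            rw [this]; ring
          rw [this, add_zero]
        have eT : ∀ i ∈ T, ∑ j ∈ s, A' i j * x i * x j = ∑ j ∈ T, A' i j * x i * x j := by
          intro i hi
          rw [hsplit (fun j => A' i j * x i * x j)]
          have : ∑ j ∈ S, A' i j * x i * x j = 0 := by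
            refine Finset.sum_eq_zero fun j hj => ?_
            have hji : A i j = τ := by
              rw [hsymm i (hTs hi) j (hSs hj)]
              exact hcross j hj i hi
            have : A' i j = 0 := by simp [hA', hji]
            rw [this]; ring
          rw [this, zero_add]
        rw [Finset.sum_congr rfl eS, Finset.sum_congr rfl eT]
      rw [e1, e2]
    rw [key]
    have hTcard : T.card < m := by
      rw [← hcard]
      apply Finset.card_lt_card
      exact Finset.ssubset_iff_of_subset hTs |>.2 ⟨i₀, hi₀, fun h => hST i₀ hi₀S h⟩
    have hScard : S.card < m := by
      rw [← hcard]
      apply Finset.card_lt_card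
      exact Finset.ssubset_iff_of_subset hSs |>.2 ⟨j₀, hj₀, fun h => hST j₀ h hj₀T⟩
    have hA'props : ∀ t : Finset ι, t ⊆ s →
        (∀ i ∈ t, ∀ j ∈ t, A' i j = A' j i) ∧
        (∀ i ∈ t, ∀ j ∈ t, 0 ≤ A' i j) ∧
        (∀ i ∈ t, ∀ j ∈ t, A' i j ≤ A' i i) ∧
        (∀ i ∈ t, ∀ j ∈ t, ∀ k ∈ t, min (A' i k) (A' k j) ≤ A' i j) := by
      intro t hts
      refine ⟨fun i hi j hj => by simp [hA', hsymm i (hts hi) j (hts hj)],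
        fun i hi j hj => by simp [hA', hτle i (hts hi) j (hts hj)],
        fun i hi j hj => by simp only [hA']; linarith [hpw i (hts hi) j (hts hj)],
        fun i hi j hj k hk => ?_⟩
      have hm := hmin i (hts hi) j (hts hj) k (hts hk)
      simp only [hA']
      rcases le_total (A i k) (A k j) with h | h
      · rw [min_eq_left (by linarith)]
        rw [min_eq_left h] at hm
        linarith
      · rw [min_eq_right (by linarith)]
        rw [min_eq_right h] at hm
        linarith
    obtain ⟨s1, s2, s3, s4⟩ := hA'props S hSs
    obtain ⟨t1, t2, t3, t4⟩ := hA'props T hTs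
    have h1 := IH S.card hScard A' S rfl s1 s2 s3 s4 x
    have h2 := IH T.card hTcard A' T rfl t1 t2 t3 t4 x
    nlinarith [mul_self_nonneg (∑ i ∈ s, x i)]


lemma trace_bound [Fintype ι] (A : Matrix ι ι ℝ)
    (hsymm : ∀ i j, A i j = A j i) (hpd : A.PosDef)
    (t : ℝ) (ht : 0 ≤ t) (hle : ∀ i j, t ≤ A i j)
    (hpw : ∀ i j, A i j ≤ A i i)
    (hmin : ∀ i j k, min (A i k) (A k j) ≤ A i j) :
    t * (∑ i, ∑ j, A⁻¹ i j) ≤ 1 := by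
  classical
  have hAinv : A * A⁻¹ = 1 :=
    Matrix.mul_nonsing_inv A (isUnit_iff_ne_zero.mpr hpd.det_pos.ne')
  set y : ι → ℝ := fun i => ∑ j, A⁻¹ i j with hy
  have hAy : ∀ i, ∑ k, A i k * y k = 1 := by
    intro i
    have : ∑ k, A i k * y k = ∑ j, ∑ k, A i k * A⁻¹ k j := by
      rw [Finset.sum_comm]
      exact Finset.sum_congr rfl fun k _ => by rw [hy, Finset.mul_sum]
    rw [this]
    have : ∀ j, ∑ k, A i k * A⁻¹ k j = (1 : Matrix ι ι ℝ) i j := by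
      intro j; rw [← hAinv, Matrix.mul_apply]
    rw [Finset.sum_congr rfl fun j _ => this j]
    exact (Finset.sum_congr rfl fun j _ => Matrix.one_apply).trans (by simp)
  set sy := ∑ i, y i with hsy
  have hgoal : ∑ i, ∑ j, A⁻¹ i j = sy := rfl
  have h1 : ∑ i, ∑ j, A i j * y i * y j = sy := by
    have : ∀ i, ∑ j, A i j * y i * y j = y i * ∑ j, A i j * y j := by
      intro i
      rw [Finset.mul_sum]
      exact Finset.sum_congr rfl fun j _ => by ring
    rw [Finset.sum_congr rfl fun i _ => this i]
    rw [Finset.sum_congr rfl fun i _ => by rw [hAy i, mul_one]]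
  have h2 : 0 ≤ sy := by
    have hps := hpd.posSemidef.dotProduct_mulVec_nonneg y
    have : dotProduct (star y) (A *ᵥ y) = sy := by
      rw [hsy]
      simp only [star_trivial, dotProduct, Matrix.mulVec, dotProduct]
      exact Finset.sum_congr rfl fun i _ => by rw [hAy i, mul_one]
    rw [this] at hps
    exact hps
  have h3 : 0 ≤ sy - t * sy ^ 2 := by
    have hq := ultra_qf_nonneg (Finset.univ.card) (fun i j => A i j - t) Finset.univ rfl
      (fun i _ j _ => by simp [hsymm i j])
      (fun i _ j _ => by simp [hle i j])
      (fun i _ j _ => by simpa using hpw i j)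
      (fun i _ j _ k _ => by
        have hm := hmin i j k
        rcases le_total (A i k) (A k j) with h | h
        · rw [min_eq_left (by simpa using h)]
          rw [min_eq_left h] at hm
          simpa using hm
        · rw [min_eq_right (by simpa using h)]
          rw [min_eq_right h] at hm
          simpa using hm) y
    have hexp : ∑ i, ∑ j, (A i j - t) * y i * y j
        = (∑ i, ∑ j, A i j * y i * y j) - t * sy ^ 2 := by
      have hts : t * sy ^ 2 = ∑ i, ∑ j, t * (y i * y j) := by
        rw [hsy, sq, Finset.sum_mul_sum, Finset.mul_sum]
        exact Finset.sum_congr rfl fun i _ => by rw [Finset.mul_sum]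
      rw [hts, ← Finset.sum_sub_distrib]
      refine Finset.sum_congr rfl fun i _ => ?_
      rw [← Finset.sum_sub_distrib]
      exact Finset.sum_congr rfl fun j _ => by ring
    rw [hexp, h1] at hq
    exact hq
  nlinarith [h2, h3, ht, mul_nonneg ht h2]



def mext0 (S : Finset ι) (K : Matrix {x // x ∈ S} {x // x ∈ S} ℝ) : Matrix ι ι ℝ :=
  fun a b => if h : a ∈ S ∧ b ∈ S then K ⟨a, h.1⟩ ⟨b, h.2⟩ else 0

lemma mext0_mem {S : Finset ι} (K : Matrix {x // x ∈ S} {x // x ∈ S} ℝ) {a b : ι}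
    (ha : a ∈ S) (hb : b ∈ S) : mext0 S K a b = K ⟨a, ha⟩ ⟨b, hb⟩ := by
  unfold mext0; exact dif_pos ⟨ha, hb⟩

lemma mext0_left {S : Finset ι} (K : Matrix {x // x ∈ S} {x // x ∈ S} ℝ) {a b : ι}
    (ha : a ∉ S) : mext0 S K a b = 0 := by
  unfold mext0; exact dif_neg (fun h => ha h.1)

lemma mext0_right {S : Finset ι} (K : Matrix {x // x ∈ S} {x // x ∈ S} ℝ) {a b : ι}
    (hb : b ∉ S) : mext0 S K a b = 0 := by
  unfold mext0; exact dif_neg (fun h => hb h.2)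

lemma stage1 [Fintype ι] (A : Matrix ι ι ℝ)
    (hsymm : ∀ i j, A i j = A j i) (hnn : ∀ i j, 0 ≤ A i j)
    (hpw : ∀ i j, A i j ≤ A i i) (hmin : ∀ i j k, min (A i k) (A k j) ≤ A i j)
    (hpd : A.PosDef) (S : Finset ι) (τ : ℝ) (hτ0 : 0 ≤ τ)
    (hτle : ∀ i j, τ ≤ A i j)
    (hcross : ∀ c ∈ S, ∀ e, e ∉ S → A c e = τ)
    (ihS : ∀ (i : {x // x ∈ S}),
      0 ≤ ∑ j, (Matrix.of fun i j : {x // x ∈ S} => A i.1 j.1)⁻¹ i j) :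
    ∃ (u : ι → ℝ) (bi : Matrix ι ι ℝ) (β : ℝ),
      (∀ k, k ∉ S → u k = 0) ∧ (∀ k, 0 ≤ u k) ∧
      (∀ i ∈ S, ∑ k, A i k * u k = 1) ∧
      (∀ i, i ∉ S → ∑ k, A i k * u k = τ * β) ∧
      (∀ a b, a ∉ S → bi a b = 0) ∧ (∀ a b, b ∉ S → bi a b = 0) ∧
      (∀ i ∈ S, ∀ j ∈ S, ∑ k, A i k * bi k j = if i = j then 1 else 0) ∧
      (∀ i, i ∉ S → ∀ j ∈ S, ∑ k, A i k * bi k j = τ * u j) ∧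
      (∀ i ∈ S, ∑ j, bi i j = u i) ∧
      (∀ j ∈ S, ∑ k, bi k j = u j) ∧
      (β = ∑ k, u k) ∧ 0 ≤ β ∧ τ * β ≤ 1 := by
  classical
  set B : Matrix {x // x ∈ S} {x // x ∈ S} ℝ := Matrix.of fun i j => A i.1 j.1 with hBdef
  have hBsymm : ∀ i j, B i j = B j i := fun i j => hsymm i.1 j.1
  have hBpd : B.PosDef := posdef_restrict A hpd hsymm S
  have hBdet : IsUnit B.det := isUnit_iff_ne_zero.mpr hBpd.det_pos.ne'
  set Bi : Matrix {x // x ∈ S} {x // x ∈ S} ℝ := B⁻¹ with hBidef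
  have hBBi : B * Bi = 1 := Matrix.mul_nonsing_inv B hBdet
  have hBisymm : ∀ p q, Bi p q = Bi q p := by
    have h1 : Bᵀ = B := Matrix.ext fun i j => hBsymm j i
    have h2 : Biᵀ = Bi := by rw [hBidef, Matrix.transpose_nonsing_inv, h1]
    intro p q
    calc Bi p q = Biᵀ q p := rfl
    _ = Bi q p := by rw [h2]
  set us : {x // x ∈ S} → ℝ := fun i => ∑ j, Bi i j with husdef
  set u : ι → ℝ := ext0 S us with hudef
  set bi : Matrix ι ι ℝ := mext0 S Bi with hbidef
  set β : ℝ := ∑ k, u k with hβdef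
  have hu0 : ∀ k, k ∉ S → u k = 0 := fun k h => ext0_not_mem us h
  have hunn : ∀ k, 0 ≤ u k := by
    intro k
    by_cases h : k ∈ S
    · rw [hudef, ext0_mem us h]; exact ihS ⟨k, h⟩
    · rw [hu0 k h]
  -- subtype-level row identity: B *ᵥ us = 1
  have fB1 : ∀ i : {x // x ∈ S}, ∑ k : {x // x ∈ S}, B i k * us k = 1 := by
    intro i
    have : ∑ k : {x // x ∈ S}, B i k * us k
        = ∑ j : {x // x ∈ S}, ∑ k : {x // x ∈ S}, B i k * Bi k j := by
      rw [Finset.sum_comm]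
      exact Finset.sum_congr rfl fun k _ => by rw [husdef, Finset.mul_sum]
    rw [this]
    have : ∀ j : {x // x ∈ S}, ∑ k : {x // x ∈ S}, B i k * Bi k j
        = (1 : Matrix {x // x ∈ S} {x // x ∈ S} ℝ) i j := by
      intro j; rw [← hBBi, Matrix.mul_apply]
    rw [Finset.sum_congr rfl fun j _ => this j]
    exact (Finset.sum_congr rfl fun j _ => Matrix.one_apply).trans (by simp)
  -- u restricted sums
  have husum : ∀ (f : ι → ℝ), ∑ k, f k * u k = ∑ k ∈ S, f k * u k := by
    intro f
    exact (Finset.sum_subset (Finset.subset_univ S)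
      (fun k _ hk => by rw [hu0 k hk, mul_zero])).symm
  have hAu : ∀ i ∈ S, ∑ k, A i k * u k = 1 := by
    intro i hi
    rw [husum (fun k => A i k)]
    rw [sum_S_subtype S (fun k => B ⟨i, hi⟩ k * us k) _
      (fun k hk => by rw [hudef, ext0_mem us hk]; rfl)]
    exact fB1 ⟨i, hi⟩
  have hβS : β = ∑ k ∈ S, u k := by
    rw [hβdef]
    exact (Finset.sum_subset (Finset.subset_univ S) (fun k _ hk => hu0 k hk)).symm
  have hAuT : ∀ i, i ∉ S → ∑ k, A i k * u k = τ * β := by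
    intro i hi
    rw [husum (fun k => A i k), hβS, Finset.mul_sum]
    refine Finset.sum_congr rfl fun k hk => ?_
    rw [hsymm i k, hcross k hk i hi]
  have hbileft : ∀ a b, a ∉ S → bi a b = 0 := fun a b ha => mext0_left Bi ha
  have hbiright : ∀ a b, b ∉ S → bi a b = 0 := fun a b hb => mext0_right Bi hb
  have hbisum : ∀ (f : ι → ℝ) (j : ι), ∑ k, f k * bi k j = ∑ k ∈ S, f k * bi k j := by
    intro f j
    exact (Finset.sum_subset (Finset.subset_univ S)
      (fun k _ hk => by rw [hbileft k j hk, mul_zero])).symm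
  have hAbi : ∀ i ∈ S, ∀ j ∈ S, ∑ k, A i k * bi k j = if i = j then 1 else 0 := by
    intro i hi j hj
    rw [hbisum (fun k => A i k) j]
    rw [sum_S_subtype S (fun k => B ⟨i, hi⟩ k * Bi k ⟨j, hj⟩) _
      (fun k hk => by rw [hbidef, mext0_mem Bi hk hj]; rfl)]
    have : ∑ k : {x // x ∈ S}, B ⟨i, hi⟩ k * Bi k ⟨j, hj⟩
        = (1 : Matrix {x // x ∈ S} {x // x ∈ S} ℝ) ⟨i, hi⟩ ⟨j, hj⟩ := by
      rw [← hBBi, Matrix.mul_apply]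
    rw [this]
    simp [Matrix.one_apply, Subtype.ext_iff]
  have hcolbi : ∀ j ∈ S, ∑ k, bi k j = u j := by
    intro j hj
    have : ∑ k, bi k j = ∑ k ∈ S, (fun k => 1 * bi k j) k := by
      simpa using hbisum (fun _ => (1:ℝ)) j
    rw [this]
    simp only [one_mul]
    rw [sum_S_subtype S (fun k => Bi k ⟨j, hj⟩) _
      (fun k hk => by rw [hbidef, mext0_mem Bi hk hj])]
    rw [hudef, ext0_mem us hj, husdef]
    exact Finset.sum_congr rfl fun k _ => hBisymm k ⟨j, hj⟩
  have hrowbi : ∀ i ∈ S, ∑ j, bi i j = u i := by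
    intro i hi
    have : ∑ j, bi i j = ∑ j ∈ S, bi i j :=
      (Finset.sum_subset (Finset.subset_univ S)
        (fun j _ hj => hbiright i j hj)).symm
    rw [this]
    rw [sum_S_subtype S (fun j => Bi ⟨i, hi⟩ j) _
      (fun j hjk => by rw [hbidef, mext0_mem Bi hi hjk])]
    rw [hudef, ext0_mem us hi, husdef]
  have hAbiT : ∀ i, i ∉ S → ∀ j ∈ S, ∑ k, A i k * bi k j = τ * u j := by
    intro i hi j hj
    rw [hbisum (fun k => A i k) j]
    have : ∀ k ∈ S, A i k * bi k j = τ * bi k j := by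
      intro k hk
      rw [hsymm i k, hcross k hk i hi]
    rw [Finset.sum_congr rfl this, ← Finset.mul_sum]
    congr 1
    rw [← hcolbi j hj]
    exact Finset.sum_subset (Finset.subset_univ S) (fun k _ hk => hbileft k j hk)
  have hβnn : 0 ≤ β := by
    rw [hβdef]; exact Finset.sum_nonneg fun k _ => hunn k
  have hτβ : τ * β ≤ 1 := by
    have htb := trace_bound B hBsymm hBpd τ hτ0 (fun i j => hτle i.1 j.1)
      (fun i j => hpw i.1 j.1) (fun i j k => hmin i.1 j.1 k.1)
    have : ∑ i : {x // x ∈ S}, ∑ j, B⁻¹ i j = β := by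
      rw [hβS]
      rw [sum_S_subtype S (fun i => ∑ j, Bi i j) u
        (fun k hk => by rw [hudef, ext0_mem us hk, husdef])]
    rw [this] at htb
    exact htb
  exact ⟨u, bi, β, hu0, hunn, hAu, hAuT, hbileft, hbiright, hAbi, hAbiT, hrowbi, hcolbi,
    hβdef, hβnn, hτβ⟩



lemma stage2 [Fintype ι] (A : Matrix ι ι ℝ)
    (hsymm : ∀ i j, A i j = A j i)
    (hpw : ∀ i j, A i j ≤ A i i) (hmin : ∀ i j k, min (A i k) (A k j) ≤ A i j)
    (hpd : A.PosDef) (S : Finset ι) (τ : ℝ) (hτ0 : 0 ≤ τ)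
    (hτle : ∀ i j, τ ≤ A i j)
    (hcross' : ∀ c ∈ S, ∀ e, e ∉ S → A e c = τ)
    (u : ι → ℝ) (bi : Matrix ι ι ℝ) (β γ d : ℝ)
    (hu0 : ∀ k, k ∉ S → u k = 0)
    (hAu : ∀ i ∈ S, ∑ k, A i k * u k = 1)
    (hbileft : ∀ a b, a ∉ S → bi a b = 0)
    (hAbi : ∀ i ∈ S, ∀ j ∈ S, ∑ k, A i k * bi k j = if i = j then 1 else 0)
    (hcolbi : ∀ j ∈ S, ∑ k, bi k j = u j)
    (hβdef : β = ∑ k, u k)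
    (w : ι → ℝ)
    (hw0 : ∀ k ∈ S, w k = 0)
    (hAwS : ∀ i ∈ S, ∑ k, A i k * w k = τ * γ)
    (hAwT : ∀ i, i ∉ S → ∑ k, A i k * w k = 1)
    (hγnn : 0 ≤ γ) (hτγ : τ * γ ≤ 1)
    (hddef : d = 1 - τ^2 * β * γ) (hdpos : 0 < d)
    (ihS : ∀ (A' : Matrix {x // x ∈ S} {x // x ∈ S} ℝ),
      (∀ i j, A' i j = A' j i) → (∀ i j, 0 ≤ A' i j) → (∀ i j, A' i j ≤ A' i i) →
      (∀ i j k, min (A' i k) (A' k j) ≤ A' i j) → A'.PosDef →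
      (∀ i j, i ≠ j → A'⁻¹ i j ≤ 0)) :
    ∀ i ∈ S, ∀ j ∈ S, i ≠ j → bi i j + (τ^2 * γ / d) * u i * u j ≤ 0 := by
  classical
  set B' : Matrix {x // x ∈ S} {x // x ∈ S} ℝ :=
    Matrix.of (fun i j => A i.1 j.1 - τ * (τ * γ)) with hB'def
  have hτ2γ : 0 ≤ τ * (τ * γ) := mul_nonneg hτ0 (mul_nonneg hτ0 hγnn)
  have hτ2γτ : τ * (τ * γ) ≤ τ := by nlinarith
  have hB'symm : ∀ i j, B' i j = B' j i := fun i j => by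
    simp only [hB'def, Matrix.of_apply, hsymm i.1 j.1]
  have hB'nn : ∀ i j, 0 ≤ B' i j := fun i j => by
    simp only [hB'def, Matrix.of_apply]
    have := hτle i.1 j.1
    linarith
  have hB'pw : ∀ i j, B' i j ≤ B' i i := fun i j => by
    simp only [hB'def, Matrix.of_apply]
    have := hpw i.1 j.1
    linarith
  have hB'min : ∀ i j k, min (B' i k) (B' k j) ≤ B' i j := by
    intro i j k
    simp only [hB'def, Matrix.of_apply]
    have hm := hmin i.1 j.1 k.1
    rcases le_total (A i.1 k.1) (A k.1 j.1) with h | h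
    · rw [min_eq_left (by linarith)]
      rw [min_eq_left h] at hm
      linarith
    · rw [min_eq_right (by linarith)]
      rw [min_eq_right h] at hm
      linarith
  have hB'pd : B'.PosDef := by
    have := posdef_restrict_shift A hpd hsymm S τ (τ * γ) w hw0 hAwS
      (fun i hi _ => ⟨hAwT i hi, fun j hj => hcross' j hj i hi⟩)
    exact this
  -- the candidate inverse of B'
  set e1 : ℝ := τ^2 * γ / d with he1def
  set K : Matrix {x // x ∈ S} {x // x ∈ S} ℝ :=
    Matrix.of (fun i j => bi i.1 j.1 + e1 * u i.1 * u j.1) with hKdef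
  -- restricted sums
  have husum : ∀ i ∈ S, ∑ k ∈ S, A i k * u k = 1 := by
    intro i hi
    rw [Finset.sum_subset (Finset.subset_univ S)
      (fun k _ hk => by rw [hu0 k hk, mul_zero])]
    exact hAu i hi
  have hβsum : ∑ k ∈ S, u k = β := by
    rw [hβdef]
    exact Finset.sum_subset (Finset.subset_univ S) (fun k _ hk => hu0 k hk)
  have hbisum : ∀ i ∈ S, ∀ j ∈ S, ∑ k ∈ S, A i k * bi k j = if i = j then 1 else 0 := by
    intro i hi j hj
    rw [Finset.sum_subset (Finset.subset_univ S)
      (fun k _ hk => by rw [hbileft k j hk, mul_zero])]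
    exact hAbi i hi j hj
  have hcolsum : ∀ j ∈ S, ∑ k ∈ S, bi k j = u j := by
    intro j hj
    rw [Finset.sum_subset (Finset.subset_univ S)
      (fun k _ hk => hbileft k j hk)]
    exact hcolbi j hj
  have hB'K : B' * K = 1 := by
    apply Matrix.ext
    intro i j
    rw [Matrix.mul_apply]
    have hbridge : ∑ k : {x // x ∈ S}, B' i k * K k j
        = ∑ k ∈ S, (A i.1 k - τ * (τ * γ)) * (bi k j.1 + e1 * u k * u j.1) := by
      rw [sum_S_subtype S (fun k => B' i k * K k j)
        (fun k => (A i.1 k - τ * (τ * γ)) * (bi k j.1 + e1 * u k * u j.1))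
        (fun k hk => rfl)]
    rw [hbridge]
    have hexpand : ∀ k ∈ S, (A i.1 k - τ * (τ * γ)) * (bi k j.1 + e1 * u k * u j.1)
        = (A i.1 k * bi k j.1) + (e1 * u j.1) * (A i.1 k * u k)
          - (τ * (τ * γ)) * bi k j.1 - (τ * (τ * γ) * e1 * u j.1) * u k := by
      intro k _; ring
    rw [Finset.sum_congr rfl hexpand]
    rw [Finset.sum_sub_distrib, Finset.sum_sub_distrib, Finset.sum_add_distrib,
      ← Finset.mul_sum, ← Finset.mul_sum, ← Finset.mul_sum]
    rw [hbisum i.1 i.2 j.1 j.2, husum i.1 i.2, hcolsum j.1 j.2, hβsum]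
    have hdne : (1 : ℝ) - τ^2 * β * γ ≠ 0 := by rw [← hddef]; exact ne_of_gt hdpos
    have hcoef : e1 * u j.1 * 1 - τ * (τ * γ) * u j.1 - τ * (τ * γ) * e1 * u j.1 * β = 0 := by
      rw [he1def]
      field_simp
      rw [hddef]
      ring
    have hone : (1 : Matrix {x // x ∈ S} {x // x ∈ S} ℝ) i j
        = if i.1 = j.1 then 1 else 0 := by
      rw [Matrix.one_apply]; exact if_congr Subtype.ext_iff rfl rfl
    rw [hone]
    linarith [hcoef]
  have hKinv : B'⁻¹ = K := Matrix.inv_eq_right_inv hB'K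
  intro i hi j hj hij
  have := ihS B' hB'symm hB'nn hB'pw hB'min hB'pd ⟨i, hi⟩ ⟨j, hj⟩
    (fun h => hij (congrArg Subtype.val h))
  rw [hKinv] at this
  simpa [hKdef, he1def] using this


lemma ultra_inv_signs : ∀ (m : ℕ) (κ : Type u) [Fintype κ] [DecidableEq κ]
    (A : Matrix κ κ ℝ),
    Fintype.card κ ≤ m →
    (∀ i j, A i j = A j i) → (∀ i j, 0 ≤ A i j) → (∀ i j, A i j ≤ A i i) →
    (∀ i j k, min (A i k) (A k j) ≤ A i j) → A.PosDef →
    (∀ i j, i ≠ j → A⁻¹ i j ≤ 0) ∧ (∀ i, 0 ≤ ∑ j, A⁻¹ i j) := by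
  intro m
  induction m with
  | zero =>
    intro κ _ _ A hcard _ _ _ _ _
    have : IsEmpty κ := Fintype.card_eq_zero_iff.mp (Nat.le_zero.mp hcard)
    exact ⟨fun i => isEmptyElim i, fun i => isEmptyElim i⟩
  | succ m IH =>
    intro κ _ _ A hcard hsymm hnn hpw hmin hpd
    classical
    have hAdet : IsUnit A.det := isUnit_iff_ne_zero.mpr hpd.det_pos.ne'
    have hAAi : A * A⁻¹ = 1 := Matrix.mul_nonsing_inv A hAdet
    by_cases hsub : ∀ a b : κ, a = b
    · refine ⟨fun i j hij => absurd (hsub i j) hij, fun i => ?_⟩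
      have huniv : (Finset.univ : Finset κ) = {i} := by
        apply Finset.eq_singleton_iff_unique_mem.2
        exact ⟨Finset.mem_univ i, fun b _ => hsub b i⟩
      have h1 : A i i * A⁻¹ i i = 1 := by
        have h := congrFun (congrFun hAAi i) i
        rw [Matrix.mul_apply, huniv, Finset.sum_singleton] at h
        rw [h, Matrix.one_apply_eq]
      rw [huniv, Finset.sum_singleton]
      nlinarith [hnn i i]
    · push_neg at hsub
      obtain ⟨a0, b0, hab⟩ := hsub
      by_cases hsmall : Fintype.card κ ≤ m
      · exact IH κ A hsmall hsymm hnn hpw hmin hpd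
      -- minimum entry τ
      obtain ⟨p, hpmem, hpmin⟩ := Finset.exists_min_image (Finset.univ ×ˢ Finset.univ)
        (fun q : κ × κ => A q.1 q.2)
        ⟨(a0, b0), Finset.mem_product.2 ⟨Finset.mem_univ _, Finset.mem_univ _⟩⟩
      set τ : ℝ := A p.1 p.2 with hτdef
      have hτle : ∀ i j, τ ≤ A i j := fun i j =>
        hpmin (i, j) (Finset.mem_product.2 ⟨Finset.mem_univ _, Finset.mem_univ _⟩)
      have hτ0 : 0 ≤ τ := hnn p.1 p.2
      have hpair : ∃ i₀ j₀ : κ, i₀ ≠ j₀ ∧ A i₀ j₀ = τ := by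
        by_cases hpq : p.1 = p.2
        · set z := p.1 with hzdef
          have hzz : A z z = τ := by rw [hτdef, ← hpq]
          obtain ⟨c, hcz⟩ : ∃ c : κ, c ≠ z := by
            by_cases haz : a0 = z
            · exact ⟨b0, by rw [← haz]; exact fun h => hab h.symm⟩
            · exact ⟨a0, haz⟩
          refine ⟨z, c, fun h => hcz h.symm, le_antisymm ?_ (hτle z c)⟩
          calc A z c ≤ A z z := hpw z c
          _ = τ := hzz
        · exact ⟨p.1, p.2, hpq, rfl⟩
      obtain ⟨i₀, j₀, hij₀, hAij₀⟩ := hpair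
      set S : Finset κ := Finset.univ.filter (fun k => k = i₀ ∨ τ < A i₀ k) with hSdef
      have hi₀S : i₀ ∈ S := Finset.mem_filter.2 ⟨Finset.mem_univ _, Or.inl rfl⟩
      have hj₀S : j₀ ∉ S := by
        intro h
        rcases (Finset.mem_filter.1 h).2 with h' | h'
        · exact hij₀ h'.symm
        · rw [hAij₀] at h'; exact lt_irrefl τ h'
      have hnotS : ∀ e, e ∉ S → ¬(e = i₀) ∧ A i₀ e ≤ τ := by
        intro e he
        have : ¬(e = i₀ ∨ τ < A i₀ e) := fun h => he (Finset.mem_filter.2 ⟨Finset.mem_univ _, h⟩)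
        push_neg at this
        exact this
      have hcrossS : ∀ c ∈ S, ∀ e, e ∉ S → A c e = τ := by
        intro c hc e he
        obtain ⟨he1, he2⟩ := hnotS e he
        refine le_antisymm ?_ (hτle c e)
        by_contra hlt
        push_neg at hlt
        rcases (Finset.mem_filter.1 hc).2 with rfl | hcp
        · exact absurd hlt (not_lt.2 he2)
        · have hm := hmin i₀ e c
          rw [min_def] at hm
          have : τ < A i₀ e := by
            split_ifs at hm with h
            · exact lt_of_lt_of_le hcp hm
            · exact lt_of_lt_of_le hlt hm
          exact absurd this (not_lt.2 he2)
      have hcrossS' : ∀ c ∈ S, ∀ e, e ∉ S → A e c = τ :=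
        fun c hc e he => (hsymm e c).trans (hcrossS c hc e he)
      have hcrossT : ∀ c ∈ Sᶜ, ∀ e, e ∉ Sᶜ → A c e = τ := by
        intro c hc e he
        have heS : e ∈ S := by
          by_contra h
          exact he (Finset.mem_compl.2 h)
        exact hcrossS' e heS c (Finset.mem_compl.1 hc)
      have hcrossT' : ∀ c ∈ Sᶜ, ∀ e, e ∉ Sᶜ → A e c = τ :=
        fun c hc e he => (hsymm e c).trans (hcrossT c hc e he)
      -- cardinalities
      have hcards := Finset.card_add_card_compl S
      have hSpos : 0 < S.card := Finset.card_pos.2 ⟨i₀, hi₀S⟩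
      have hTpos : 0 < Sᶜ.card := Finset.card_pos.2 ⟨j₀, Finset.mem_compl.2 hj₀S⟩
      have hcardS : Fintype.card {x // x ∈ S} ≤ m := by rw [Fintype.card_coe]; omega
      have hcardT : Fintype.card {x // x ∈ Sᶜ} ≤ m := by rw [Fintype.card_coe]; omega
      -- induction hypotheses for the restricted matrices
      have IHB := IH {x // x ∈ S} (Matrix.of fun i j => A i.1 j.1) hcardS
        (fun i j => hsymm i.1 j.1) (fun i j => hnn i.1 j.1) (fun i j => hpw i.1 j.1)
        (fun i j k => hmin i.1 j.1 k.1) (posdef_restrict A hpd hsymm S)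
      have IHC := IH {x // x ∈ Sᶜ} (Matrix.of fun i j => A i.1 j.1) hcardT
        (fun i j => hsymm i.1 j.1) (fun i j => hnn i.1 j.1) (fun i j => hpw i.1 j.1)
        (fun i j k => hmin i.1 j.1 k.1) (posdef_restrict A hpd hsymm Sᶜ)
      obtain ⟨u, bi, β, hu0, hunn, hAu, hAuT, hbileft, hbiright, hAbi, hAbiT,
        hrowbi, hcolbi, hβdef, hβnn, hτβ⟩ :=
        stage1 A hsymm hnn hpw hmin hpd S τ hτ0 hτle hcrossS IHB.2
      obtain ⟨w, ci, γ, hw0', hwnn, hAw, hAwT', hcileft, hciright, hAci, hAciT,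
        hrowci, hcolci, hγdef, hγnn, hτγ⟩ :=
        stage1 A hsymm hnn hpw hmin hpd Sᶜ τ hτ0 hτle hcrossT IHC.2
      -- translate the Sᶜ facts to S-language
      have hw0 : ∀ k ∈ S, w k = 0 := fun k hk => hw0' k (by simp [Finset.mem_compl, hk])
      have hAwS : ∀ i ∈ S, ∑ k, A i k * w k = τ * γ :=
        fun i hi => hAwT' i (by simp [Finset.mem_compl, hi])
      have hAwT : ∀ i, i ∉ S → ∑ k, A i k * w k = 1 :=
        fun i hi => hAw i (Finset.mem_compl.2 hi)
      have huT : ∀ k ∈ Sᶜ, u k = 0 := fun k hk => hu0 k (Finset.mem_compl.1 hk)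
      have hAuTc : ∀ i ∈ Sᶜ, ∑ k, A i k * u k = τ * β :=
        fun i hi => hAuT i (Finset.mem_compl.1 hi)
      have hAuSc : ∀ i, i ∉ Sᶜ → ∑ k, A i k * u k = 1 := by
        intro i hi
        have : i ∈ S := by by_contra h; exact hi (Finset.mem_compl.2 h)
        exact hAu i this
      -- positivity of d
      set d : ℝ := 1 - τ^2 * β * γ with hddef
      have hwne : ∃ k, w k ≠ 0 := by
        by_contra h
        push_neg at h
        have h1 := hAwT j₀ hj₀S
        rw [Finset.sum_congr rfl (fun k _ => by rw [h k, mul_zero])] at h1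
        simp at h1
      have hγsum : γ = ∑ i ∈ Sᶜ, w i := by
        rw [hγdef, ← Finset.sum_add_sum_compl S w]
        rw [Finset.sum_eq_zero (fun i hi => hw0 i hi), zero_add]
      have hγpos : 0 < γ := by
        have hwfne : w ≠ 0 := by
          intro h
          obtain ⟨k, hk⟩ := hwne
          exact hk (congrFun h k)
        have hq := hpd.dotProduct_mulVec_pos hwfne
        simp only [star_trivial] at hq
        have hdot : dotProduct w (A *ᵥ w) = γ := by
          simp only [dotProduct, Matrix.mulVec, dotProduct]
          rw [← Finset.sum_add_sum_compl S (fun i => w i * ∑ k, A i k * w k)]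
          rw [Finset.sum_eq_zero (fun i hi => by rw [hw0 i hi, zero_mul]), zero_add]
          rw [hγsum]
          refine Finset.sum_congr rfl fun i hi => ?_
          rw [hAwT i (Finset.mem_compl.1 hi), mul_one]
        rw [hdot] at hq
        exact hq
      have hdpos : 0 < d := by
        set z : κ → ℝ := fun k => τ * γ * u k - w k with hzdef
        have hzne : z ≠ 0 := by
          obtain ⟨k, hk⟩ := hwne
          have hkS : k ∉ S := fun h => hk (hw0 k h)
          intro h0
          have := congrFun h0 k
          simp only [hzdef, Pi.zero_apply] at this
          rw [hu0 k hkS] at this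
          apply hk
          linarith [this]
        have hq := hpd.dotProduct_mulVec_pos hzne
        simp only [star_trivial] at hq
        have hinner : ∀ i, ∑ k, A i k * z k
            = τ * γ * (∑ k, A i k * u k) - ∑ k, A i k * w k := by
          intro i
          rw [Finset.mul_sum, ← Finset.sum_sub_distrib]
          exact Finset.sum_congr rfl fun k _ => by simp only [hzdef]; ring
        have hdot : dotProduct z (A *ᵥ z) = d * γ := by
          simp only [dotProduct, Matrix.mulVec, dotProduct]
          rw [← Finset.sum_add_sum_compl S (fun i => z i * ∑ k, A i k * z k)]
          have hzS : ∑ i ∈ S, z i * ∑ k, A i k * z k = 0 := by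
            refine Finset.sum_eq_zero fun i hi => ?_
            rw [hinner i, hAu i hi, hAwS i hi]
            simp
          have hzT : ∑ i ∈ Sᶜ, z i * ∑ k, A i k * z k = d * γ := by
            have : ∀ i ∈ Sᶜ, z i * (∑ k, A i k * z k) = w i * d := by
              intro i hi
              have hiS := Finset.mem_compl.1 hi
              rw [hinner i, hAuT i hiS, hAwT i hiS]
              simp only [hzdef, hu0 i hiS, hddef]
              ring
            rw [Finset.sum_congr rfl this, ← Finset.sum_mul, ← hγsum]
            ring
          rw [hzS, hzT, zero_add]
        rw [hdot] at hq
        nlinarith [hγpos, hq]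
      -- off-diagonal sign results via stage2
      have hoffS := stage2 A hsymm hpw hmin hpd S τ hτ0 hτle hcrossS'
        u bi β γ d hu0 hAu hbileft hAbi hcolbi hβdef
        w hw0 hAwS hAwT hγnn hτγ hddef hdpos
        (fun A' h1 h2 h3 h4 h5 => (IH {x // x ∈ S} A' hcardS h1 h2 h3 h4 h5).1)
      have hoffT := stage2 A hsymm hpw hmin hpd Sᶜ τ hτ0 hτle hcrossT'
        w ci γ β d hw0' hAw hcileft hAci hcolci hγdef
        u huT hAuTc hAuSc hβnn hτβ (by rw [hddef]; ring) hdpos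
        (fun A' h1 h2 h3 h4 h5 => (IH {x // x ∈ Sᶜ} A' hcardT h1 h2 h3 h4 h5).1)
      -- the candidate inverse
      set e1 : ℝ := τ^2 * γ / d with he1def
      set e2 : ℝ := τ^2 * β / d with he2def
      set e3 : ℝ := τ / d with he3def
      set M : Matrix κ κ ℝ := fun i j =>
        bi i j + ci i j + e1 * u i * u j + e2 * w i * w j
          - e3 * (u i * w j + w i * u j) with hMdef
      have hexpA : ∀ i j, ∑ k, A i k * M k j
          = (∑ k, A i k * bi k j) + (∑ k, A i k * ci k j)
            + (e1 * u j) * (∑ k, A i k * u k) + (e2 * w j) * (∑ k, A i k * w k)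
            - ((e3 * w j) * (∑ k, A i k * u k) + (e3 * u j) * (∑ k, A i k * w k)) := by
        intro i j
        have hterm : ∀ k, A i k * M k j
            = A i k * bi k j + A i k * ci k j + (e1 * u j) * (A i k * u k)
              + (e2 * w j) * (A i k * w k)
              - ((e3 * w j) * (A i k * u k) + (e3 * u j) * (A i k * w k)) := by
          intro k
          simp only [hMdef]
          ring
        rw [Finset.sum_congr rfl fun k _ => hterm k]
        simp only [Finset.sum_add_distrib, Finset.sum_sub_distrib, ← Finset.mul_sum]
      have hbirow0 : ∀ i j, j ∉ S → ∑ k, A i k * bi k j = 0 := by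
        intro i j hj
        exact Finset.sum_eq_zero fun k _ => by rw [hbiright k j hj, mul_zero]
      have hcirow0 : ∀ i j, j ∈ S → ∑ k, A i k * ci k j = 0 := by
        intro i j hj
        refine Finset.sum_eq_zero fun k _ => ?_
        rw [hciright k j (by simp [Finset.mem_compl, hj]), mul_zero]
      have hAM : A * M = 1 := by
        ext i j
        rw [Matrix.mul_apply, Matrix.one_apply, hexpA i j]
        by_cases hiS : i ∈ S <;> by_cases hjS : j ∈ S
        · -- both in S
          rw [hAbi i hiS j hjS, hcirow0 i j hjS, hAu i hiS, hAwS i hiS, hw0 j hjS]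
          have : (e1 * u j) * 1 - (e3 * u j) * (τ * γ) = 0 := by
            simp only [he1def, he3def]; ring
          split_ifs <;> nlinarith [this]
        · -- i ∈ S, j ∉ S
          have hij : ¬(i = j) := fun h => hjS (h ▸ hiS)
          rw [if_neg hij]
          rw [hbirow0 i j hjS, hAciT i (by simp [Finset.mem_compl, hiS]) j (Finset.mem_compl.2 hjS)]
          rw [hAu i hiS, hAwS i hiS, hu0 j hjS]
          have hcoef : τ + (e2 * (τ * γ)) - e3 = 0 := by
            simp only [he2def, he3def]
            field_simp
            rw [hddef]
            ring
          linear_combination (w j) * hcoef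
        · -- i ∉ S, j ∈ S
          have hij : ¬(i = j) := fun h => hiS (h ▸ hjS)
          rw [if_neg hij]
          rw [hAbiT i hiS j hjS, hcirow0 i j hjS, hAuT i hiS, hAwT i hiS, hw0 j hjS]
          have hcoef : τ + (e1 * (τ * β)) - e3 = 0 := by
            simp only [he1def, he3def]
            field_simp
            rw [hddef]
            ring
          linear_combination (u j) * hcoef
        · -- both outside S
          rw [hbirow0 i j hjS]
          rw [hAci i (Finset.mem_compl.2 hiS) j (Finset.mem_compl.2 hjS)]
          rw [hAuT i hiS, hAwT i hiS, hu0 j hjS]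
          have : (e2 * w j) * 1 - (e3 * w j) * (τ * β) = 0 := by
            simp only [he2def, he3def]; ring
          have hite : (if (⟨i, Finset.mem_compl.2 hiS⟩ : {x // x ∈ Sᶜ}) = ⟨j, Finset.mem_compl.2 hjS⟩ then (1:ℝ) else 0) = (if i = j then (1:ℝ) else 0) := by
            simp [Subtype.ext_iff]
          split_ifs with h <;> nlinarith [this]
      have hMinv : A⁻¹ = M := Matrix.inv_eq_right_inv hAM
      constructor
      · intro i j hij
        rw [hMinv]
        by_cases hiS : i ∈ S <;> by_cases hjS : j ∈ S
        · have h := hoffS i hiS j hjS hij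
          have : M i j = bi i j + e1 * u i * u j := by
            simp only [hMdef]
            rw [hcileft i j (by simp [Finset.mem_compl, hiS]), hw0 i hiS, hw0 j hjS]
            ring
          rw [this]
          simpa [he1def] using h
        · have : M i j = -(e3 * (u i * w j)) := by
            simp only [hMdef]
            rw [hbiright i j hjS, hcileft i j (by simp [Finset.mem_compl, hiS]),
              hw0 i hiS, hu0 j hjS]
            ring
          rw [this]
          have he3nn : 0 ≤ e3 := by
            rw [he3def]; exact div_nonneg hτ0 hdpos.le
          have := mul_nonneg he3nn (mul_nonneg (hunn i) (hwnn j))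
          linarith
        · have : M i j = -(e3 * (w i * u j)) := by
            simp only [hMdef]
            rw [hbileft i j hiS, hciright i j (by simp [Finset.mem_compl, hjS]),
              hu0 i hiS, hw0 j hjS]
            ring
          rw [this]
          have he3nn : 0 ≤ e3 := by
            rw [he3def]; exact div_nonneg hτ0 hdpos.le
          have := mul_nonneg he3nn (mul_nonneg (hwnn i) (hunn j))
          linarith
        · have h := hoffT i (Finset.mem_compl.2 hiS) j (Finset.mem_compl.2 hjS) hij
          have : M i j = ci i j + e2 * w i * w j := by
            simp only [hMdef]
            rw [hbileft i j hiS, hu0 i hiS, hu0 j hjS]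
            ring
          rw [this]
          simpa [he2def] using h
      · intro i
        rw [hMinv]
        have hexpR : ∑ j, M i j
            = (∑ j, bi i j) + (∑ j, ci i j) + (e1 * u i) * (∑ j, u j)
              + (e2 * w i) * (∑ j, w j)
              - ((e3 * u i) * (∑ j, w j) + (e3 * w i) * (∑ j, u j)) := by
          have hterm : ∀ j, M i j
              = bi i j + ci i j + (e1 * u i) * u j + (e2 * w i) * w j
                - ((e3 * u i) * w j + (e3 * w i) * u j) := by
            intro j
            simp only [hMdef]
            ring
          rw [Finset.sum_congr rfl fun j _ => hterm j]
          simp only [Finset.sum_add_distrib, Finset.sum_sub_distrib, ← Finset.mul_sum]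
        rw [hexpR, ← hβdef, ← hγdef]
        by_cases hiS : i ∈ S
        · rw [hrowbi i hiS]
          have hci0 : ∑ j, ci i j = 0 :=
            Finset.sum_eq_zero fun j _ => hcileft i j (by simp [Finset.mem_compl, hiS])
          rw [hci0, hw0 i hiS]
          have hfac : 1 + e1 * β - e3 * γ = (1 - τ * γ) / d := by
            simp only [he1def, he3def]
            field_simp
            rw [hddef]
            ring
          have : u i + e1 * u i * β + 0 - (e3 * u i * γ + 0)
              = u i * ((1 - τ * γ) / d) := by
            rw [← hfac]; ring
          have hnn2 : 0 ≤ u i * ((1 - τ * γ) / d) :=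
            mul_nonneg (hunn i) (div_nonneg (by linarith [hτγ]) hdpos.le)
          nlinarith [this, hnn2]
        · have hbi0 : ∑ j, bi i j = 0 :=
            Finset.sum_eq_zero fun j _ => hbileft i j hiS
          rw [hbi0, hrowci i (Finset.mem_compl.2 hiS), hu0 i hiS]
          have hfac : 1 + e2 * γ - e3 * β = (1 - τ * β) / d := by
            simp only [he2def, he3def]
            field_simp
            rw [hddef]
            ring
          have : 0 + w i + 0 + e2 * w i * γ - (0 + e3 * w i * β)
              = w i * ((1 - τ * β) / d) := by
            rw [← hfac]; ring
          have hnn2 : 0 ≤ w i * ((1 - τ * β) / d) :=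
            mul_nonneg (hwnn i) (div_nonneg (by linarith [hτβ]) hdpos.le)
          nlinarith [this, hnn2]

end Stmt11Aux
end Stmt11Aux

theorem stmt11 (n : ℕ) (hn : 2 ≤ n) (v : Fin (n + 1) → EuclideanSpace ℝ (Fin n))
    (hv : AffineIndependent ℝ v)
    (htri : ∀ i j k : Fin (n + 1), i ≠ j → i ≠ k → j ≠ k →
      0 ≤ ⟪v j - v i, v k - v i⟫)
    (hnb : ∀ ℓ (s : Finset {x : Fin (n + 1) // x ≠ ℓ}), s.card = 3 →
      IsNonblocking (subMat (vGram v ℓ) s)) :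
    ∀ ℓ, IsStieltjes (vGram v ℓ)⁻¹ ∧ IsWDD (vGram v ℓ)⁻¹ := by
  intro ℓ
  classical
  set G := vGram v ℓ with hGdef
  have hGentry : ∀ i j : {k : Fin (n+1) // k ≠ ℓ}, G i j = ⟪v i.1 - v ℓ, v j.1 - v ℓ⟫ :=
    fun i j => rfl
  have hsymm : ∀ i j, G i j = G j i := fun i j => by
    rw [hGentry, hGentry]; exact real_inner_comm _ _
  have hnn : ∀ i j, 0 ≤ G i j := by
    intro i j
    by_cases hij : i = j
    · subst hij; rw [hGentry]; exact real_inner_self_nonneg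
    · rw [hGentry]
      exact htri ℓ i.1 j.1 (Ne.symm i.2) (Ne.symm j.2) (fun h => hij (Subtype.ext h))
  have hpw : ∀ i j, G i j ≤ G i i := by
    intro i j
    by_cases hij : i = j
    · subst hij; exact le_refl _
    · have hij' : i.1 ≠ j.1 := fun h => hij (Subtype.ext h)
      have h := htri i.1 ℓ j.1 i.2 hij' (Ne.symm j.2)
      rw [show v ℓ - v i.1 = -(v i.1 - v ℓ) from (neg_sub _ _).symm,
        show v j.1 - v i.1 = -(v i.1 - v j.1) from (neg_sub _ _).symm, inner_neg_neg] at h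
      have hexpand : G i i - G i j = ⟪v i.1 - v ℓ, v i.1 - v j.1⟫ := by
        rw [hGentry, hGentry, ← inner_sub_right]
        congr 1
        abel
      linarith
  have hminG : ∀ i j k, min (G i k) (G k j) ≤ G i j := by
    intro i j k
    by_cases hki : k = i
    · subst hki; exact min_le_right _ _
    by_cases hkj : k = j
    · subst hkj; exact min_le_left _ _
    by_cases hij : i = j
    · subst hij
      calc min (G i k) (G k i) ≤ G i k := min_le_left _ _
      _ ≤ G i i := hpw i k
    · have hcard : ({i, j, k} : Finset {x : Fin (n+1) // x ≠ ℓ}).card = 3 := by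
        rw [Finset.card_insert_of_notMem (by simp [hij, Ne.symm hki]),
          Finset.card_insert_of_notMem (by simp [Ne.symm hkj]), Finset.card_singleton]
      obtain ⟨r, hrne, hrmin⟩ := hnb ℓ {i, j, k} hcard ⟨k, by simp⟩
      have hri : r.1 = i ∨ r.1 = j ∨ r.1 = k := by
        have h2 := r.2
        simp only [Finset.mem_insert, Finset.mem_singleton] at h2
        exact h2
      have hrk : r.1 ≠ k := fun h => hrne (Subtype.ext h)
      rcases hri with h | h | h
      · have hle := hrmin ⟨j, by simp⟩
        have hle' : G i k ≤ G i j := by rw [← h]; exact hle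
        calc min (G i k) (G k j) ≤ G i k := min_le_left _ _
        _ ≤ G i j := hle'
      · have hle := hrmin ⟨i, by simp⟩
        have hle' : G j k ≤ G j i := by rw [← h]; exact hle
        calc min (G i k) (G k j) ≤ G k j := min_le_right _ _
        _ = G j k := hsymm k j
        _ ≤ G j i := hle'
        _ = G i j := hsymm j i
      · exact absurd h hrk
  have hli : LinearIndependent ℝ (fun i : {x : Fin (n+1) // x ≠ ℓ} => v i.1 -ᵥ v ℓ) :=
    (affineIndependent_iff_linearIndependent_vsub ℝ v ℓ).1 hv
  have hli' : LinearIndependent ℝ (fun i : {x : Fin (n+1) // x ≠ ℓ} => v i.1 - v ℓ) := by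
    simpa [vsub_eq_sub] using hli
  have hGpd : G.PosDef := by
    refine Matrix.PosDef.of_dotProduct_mulVec_pos ?_ ?_
    · exact Stmt11Aux.isHermitian_of_symm G hsymm
    · intro x hx
      simp only [star_trivial]
      have hquad : dotProduct x (G *ᵥ x)
          = ⟪∑ i, x i • (v i.1 - v ℓ), ∑ j, x j • (v j.1 - v ℓ)⟫ := by
        rw [sum_inner]
        simp only [dotProduct, Matrix.mulVec, dotProduct]
        refine Finset.sum_congr rfl fun i _ => ?_
        rw [real_inner_smul_left]
        congr 1
        rw [inner_sum]
        refine Finset.sum_congr rfl fun j _ => ?_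
        rw [real_inner_smul_right, hGentry]
        ring
      rw [hquad]
      have hyne : (∑ i, x i • (v i.1 - v ℓ)) ≠ 0 := by
        intro h0
        apply hx
        funext i
        exact (Fintype.linearIndependent_iff.1 hli' x h0) i
      exact lt_of_le_of_ne real_inner_self_nonneg (Ne.symm (inner_self_ne_zero.mpr hyne))
  have hmain := Stmt11Aux.ultra_inv_signs (Fintype.card {x : Fin (n+1) // x ≠ ℓ})
    {x : Fin (n+1) // x ≠ ℓ} G le_rfl hsymm hnn hpw hminG hGpd
  exact ⟨⟨hGpd.inv, fun i j hij => hmain.1 i j hij⟩, fun i => hmain.2 i⟩
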